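/- In the bipartite flow network where each left vertex has an integer supply that is exactly saturated by the flow, if the subgraph of edges carrying non-integral flow values is nonempty and contains no cycle, then any maximal path in this subgraph has both of its endpoints among the right-side vertices. -/
import Mathlib

open SimpleGraph

private lemma stmt3_aux {A B : Type*} [Fintype A] [Fintype B]
    (f : A → B → ℝ) (n : A → ℤ)
    (hsupply : ∀ a, ∑ b, f a b = (n a : ℝ))
    (G : SimpleGraph (A ⊕ B))
    (hadj : ∀ u v, G.Adj u v ↔
      ((∃ a b, u = Sum.inl a ∧ v = Sum.inr b ∧ ¬ ∃ m : ℤ, f a b = (m : ℝ)) ∨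
       (∃ a b, u = Sum.inr b ∧ v = Sum.inl a ∧ ¬ ∃ m : ℤ, f a b = (m : ℝ))))
    (hacyclic : G.IsAcyclic)
    {u v : A ⊕ B} (p : G.Walk u v) (hp : p.IsPath) (hlen : 0 < p.length)
    (hmaxu : ∀ w, G.Adj u w → w ∈ p.support) :
    u.isRight = true := by
  match u, p with
  | u, .nil => simp at hlen
  | u, .cons (v := x) h q =>
    match u with
    | Sum.inr b => rfl
    | Sum.inl a =>
      exfalso
      classical
      -- the second vertex is some Sum.inr b0 with fractional flow
      obtain ⟨a', b0, ha', hx, hfrac⟩ :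
          ∃ a' b0, (Sum.inl a : A ⊕ B) = Sum.inl a' ∧ x = Sum.inr b0 ∧
            ¬ ∃ m : ℤ, f a' b0 = (m : ℝ) := by
        rcases (hadj _ _).1 h with ⟨a', b0, ha', hx, hfrac⟩ | ⟨a', b0, ha', _, _⟩
        · exact ⟨a', b0, ha', hx, hfrac⟩
        · simp at ha'
      obtain rfl : a = a' := by simpa using ha'
      subst hx
      have hq : q.IsPath := hp.of_cons
      have hanotq : (Sum.inl a : A ⊕ B) ∉ q.support := by
        rcases (Walk.cons_isPath_iff h q).1 hp with ⟨_, h2⟩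
        exact h2
      -- uniqueness of the neighbor b0
      have huniq : ∀ b : B, G.Adj (Sum.inl a) (Sum.inr b) → b = b0 := by
        intro b hb
        by_contra hne
        have hw : (Sum.inr b : A ⊕ B) ∈ q.support := by
          have := hmaxu _ hb
          simp only [Walk.support_cons, List.mem_cons] at this
          rcases this with h1 | h1
          · simp at h1
          · exact h1
        set r := q.takeUntil _ hw with hr
        have hrpath : r.IsPath := hq.takeUntil hw
        have hanotr : (Sum.inl a : A ⊕ B) ∉ r.support :=
          fun hmem => hanotq (q.support_takeUntil_subset hw hmem)
        have hcons : (Walk.cons h r).IsPath := hrpath.cons hanotr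
        have hcyc : (Walk.cons hb.symm (Walk.cons h r)).IsCycle := by
          rw [Walk.cons_isCycle_iff]
          refine ⟨hcons, ?_⟩
          simp only [Walk.edges_cons, List.mem_cons]
          push_neg
          constructor
          · intro heq
            rw [Sym2.eq_iff] at heq
            rcases heq with ⟨h1, _⟩ | ⟨h2, _⟩
            · simp at h1
            · exact hne (by simpa using h2)
          · intro hmem
            exact hanotr (r.snd_mem_support_of_mem_edges hmem)
        exact hacyclic _ hcyc
      -- every other flow value is an integer
      have hint : ∀ b : B, b ≠ b0 → ∃ m : ℤ, f a b = (m : ℝ) := by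
        intro b hb
        by_contra hc
        have : G.Adj (Sum.inl a) (Sum.inr b) :=
          (hadj _ _).2 (Or.inl ⟨a, b, rfl, rfl, hc⟩)
        exact hb (huniq b this)
      classical
      -- choose integer values
      set g : B → ℤ := fun b => if hb : ∃ m : ℤ, f a b = (m : ℝ) then hb.choose else 0 with hg
      have hgval : ∀ b : B, b ≠ b0 → f a b = (g b : ℝ) := by
        intro b hb
        have h1 := hint b hb
        simp only [hg, dif_pos h1]
        exact h1.choose_spec
      apply hfrac
      refine ⟨n a - ∑ b ∈ Finset.univ.erase b0, g b, ?_⟩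
      have hsum : ∑ b, f a b = f a b0 + ∑ b ∈ Finset.univ.erase b0, f a b :=
        (Finset.add_sum_erase _ _ (Finset.mem_univ b0)).symm
      have : f a b0 = (n a : ℝ) - ∑ b ∈ Finset.univ.erase b0, f a b := by
        rw [← hsupply a, hsum]; ring
      rw [this, Finset.sum_congr rfl (fun b hb => hgval b (Finset.ne_of_mem_erase hb))]
      push_cast
      ring

/-- in the bipartite flow network whose left vertices have integer supplies
exactly saturated by the flow, if the subgraph of edges carrying non-integral flow is
acyclic, then any maximal (non-extendable) path of this subgraph has both endpoints on
the right side. -/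
theorem stmt3 {A B : Type*} [Fintype A] [Fintype B]
    (f : A → B → ℝ) (n : A → ℤ)
    (hsupply : ∀ a, ∑ b, f a b = (n a : ℝ))
    (G : SimpleGraph (A ⊕ B))
    (hadj : ∀ u v, G.Adj u v ↔
      ((∃ a b, u = Sum.inl a ∧ v = Sum.inr b ∧ ¬ ∃ m : ℤ, f a b = (m : ℝ)) ∨
       (∃ a b, u = Sum.inr b ∧ v = Sum.inl a ∧ ¬ ∃ m : ℤ, f a b = (m : ℝ))))
    (hacyclic : G.IsAcyclic)
    {u v : A ⊕ B} (p : G.Walk u v) (hp : p.IsPath) (hlen : 0 < p.length)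
    (hmaxu : ∀ w, G.Adj u w → w ∈ p.support)
    (hmaxv : ∀ w, G.Adj v w → w ∈ p.support) :
    u.isRight = true ∧ v.isRight = true := by
  constructor
  · exact stmt3_aux f n hsupply G hadj hacyclic p hp hlen hmaxu
  · refine stmt3_aux f n hsupply G hadj hacyclic p.reverse hp.reverse ?_ ?_
    · simpa using hlen
    · intro w hw
      have := hmaxv w hw
      simpa [Walk.support_reverse] using this
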